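/- Let X be an n-dimensional Banach space and Y a strictly convex Banach space (over the same scalar field ℝ or ℂ). Let T : X → Y be a bounded linear operator with ‖T‖ = 1 such that T attains its norm at n linearly independent unit vectors x₁, x₂, …, xₙ. Then T is an extreme point of the closed unit ball of the space L(X, Y) of bounded linear operators equipped with the operator norm. -/

import Mathlib

theorem stmt_5 {𝕜 : Type*} [RCLike 𝕜]
    {X Y : Type*} [NormedAddCommGroup X] [NormedSpace 𝕜 X] [CompleteSpace X]
    [NormedAddCommGroup Y] [NormedSpace 𝕜 Y] [CompleteSpace Y]
    [NormedSpace ℝ Y] [IsScalarTower ℝ 𝕜 Y] [StrictConvexSpace ℝ Y]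
    [FiniteDimensional 𝕜 X] (n : ℕ) (hdim : Module.finrank 𝕜 X = n)
    (T : X →L[𝕜] Y) (hT : ‖T‖ = 1)
    (x : Fin n → X) (hli : LinearIndependent 𝕜 x)
    (hunit : ∀ i, ‖x i‖ = 1) (hattain : ∀ i, ‖T (x i)‖ = 1) :
    T ∈ Set.extremePoints ℝ (Metric.closedBall (0 : X →L[𝕜] Y) 1) := by
  have hTmem : T ∈ Metric.closedBall (0 : X →L[𝕜] Y) 1 := by
    simp [Metric.mem_closedBall, dist_zero_right, hT]
  refine ⟨hTmem, ?_⟩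
  rintro A hA B hB ⟨a, b, ha, hb, hab, hABT⟩
  have hAn : ‖A‖ ≤ 1 := by simpa [dist_zero_right] using Metric.mem_closedBall.mp hA
  have hBn : ‖B‖ ≤ 1 := by simpa [dist_zero_right] using Metric.mem_closedBall.mp hB
  have hAB : ∀ i, A (x i) = B (x i) ∧ T (x i) = A (x i) := by
    intro i
    have hTx : T (x i) = a • A (x i) + b • B (x i) := by
      rw [← hABT]; rfl
    have hAi : A (x i) ∈ Metric.closedBall (0 : Y) 1 := by
      simp only [Metric.mem_closedBall, dist_zero_right]
      calc ‖A (x i)‖ ≤ ‖A‖ * ‖x i‖ := A.le_opNorm _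
        _ ≤ 1 := by rw [hunit i, mul_one]; exact hAn
    have hBi : B (x i) ∈ Metric.closedBall (0 : Y) 1 := by
      simp only [Metric.mem_closedBall, dist_zero_right]
      calc ‖B (x i)‖ ≤ ‖B‖ * ‖x i‖ := B.le_opNorm _
        _ ≤ 1 := by rw [hunit i, mul_one]; exact hBn
    have heq : A (x i) = B (x i) := by
      by_contra hne
      have hint := (strictConvex_closedBall ℝ (0 : Y) 1) hAi hBi hne ha hb hab
      rw [interior_closedBall (0 : Y) one_ne_zero] at hint
      rw [← hTx] at hint
      have : ‖T (x i)‖ < 1 := by simpa [dist_zero_right] using hint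
      rw [hattain i] at this
      exact lt_irrefl _ this
    refine ⟨heq, ?_⟩
    rw [hTx, ← heq, ← add_smul, hab, one_smul]
  have hspan : Submodule.span 𝕜 (Set.range x) = ⊤ := by
    apply Submodule.eq_top_of_finrank_eq
    rw [finrank_span_eq_card hli, hdim, Fintype.card_fin]
  have key : ∀ (S : X →L[𝕜] Y), (∀ i, S (x i) = T (x i)) → S = T := by
    intro S hS
    apply ContinuousLinearMap.coe_injective
    apply LinearMap.ext_on hspan
    rintro v ⟨i, rfl⟩
    exact hS i
  · exact key A (fun i => ((hAB i).2).symm)
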